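/- Let I be a finite nonempty index set and for each i ∈ I let γ_i ∈ ℤ and n_i ∈ R₀. Define γ_A ≥ 1 by p^{-γ_A} = min( p^{-1}, min{ max(p^{γ_i−1}, p^{γ_j−1}) / |p^{-γ_i} n_i − p^{-γ_j} n_j|_p : i, j ∈ I, p^{-γ_i} n_i ≠ p^{-γ_j} n_j } ) (with the inner minimum taken to be p^{-1} if no such pair exists). Let i₀ ∈ I be any index with γ_{i₀} = min_{i∈I} γ_i, and set γ₀ = γ_{i₀}, n₀ = n_{i₀}. Then for all a, b ∈ ℚ_p: [|a − 1|_p ≤ p^{-1} and for every i ∈ I, |p^{γ_i} b − n_i(1−a)|_p ≤ p^{-1}] holds if and only if [|1 − a|_p ≤ p^{-γ_A} and |b − p^{-γ₀} n₀ (1−a)|_p ≤ p^{γ₀−1}]. -/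

import Mathlib

open MeasureTheory

/-- Action of the `p`-adic affine group on complex-valued functions:
`(G(a,b)f)(x) = |a|_p^{-1/2} f((x-b)/a)`. -/
noncomputable def Gact (p : ℕ) [Fact p.Prime] (a b : ℚ_[p]) (f : ℚ_[p] → ℂ) : ℚ_[p] → ℂ :=
  fun x => ((‖a‖ ^ (-(1/2) : ℝ) : ℝ) : ℂ) * f ((x - b) / a)

/-- `Ω(|x|_p)`: the indicator function of the unit ball `ℤ_p`. -/
noncomputable def Omega (p : ℕ) [Fact p.Prime] : ℚ_[p] → ℂ :=
  fun x => if ‖x‖ ≤ 1 then 1 else 0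

/-- `R_σ`: the set of finite sums `∑_{l=-δ}^{σ-1} n_l p^l` with digits `n_l ∈ {0,…,p-1}`,
a complete set of representatives of `ℚ_p / p^σ ℤ_p`. -/
def Rset (p : ℕ) [Fact p.Prime] (σ : ℤ) : Set ℚ_[p] :=
  { x | ∃ (δ : ℕ) (d : ℤ → ℕ), (∀ l, d l < p) ∧
      x = ∑ l ∈ Finset.Icc (-(δ : ℤ)) (σ - 1), (d l : ℚ_[p]) * (p : ℚ_[p]) ^ l }

open scoped Classical in
theorem stmt_8 (p : ℕ) [Fact p.Prime] (ι : Type) [Fintype ι] [Nonempty ι]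
    (γv : ι → ℤ) (nv : ι → ℚ_[p]) (hn : ∀ i, nv i ∈ Rset p 0)
    (γA : ℤ) (hγA1 : 1 ≤ γA)
    (hγA : ((p : ℝ) ^ (-γA) =
      min ((p : ℝ) ^ (-1 : ℤ))
        (if h : (Finset.univ.filter (fun q : ι × ι =>
            (p : ℚ_[p]) ^ (-γv q.1) * nv q.1 ≠ (p : ℚ_[p]) ^ (-γv q.2) * nv q.2)).Nonempty then
          (Finset.univ.filter (fun q : ι × ι =>
            (p : ℚ_[p]) ^ (-γv q.1) * nv q.1 ≠ (p : ℚ_[p]) ^ (-γv q.2) * nv q.2)).inf' h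
            (fun q => max ((p : ℝ) ^ (γv q.1 - 1)) ((p : ℝ) ^ (γv q.2 - 1)) /
              ‖(p : ℚ_[p]) ^ (-γv q.1) * nv q.1 - (p : ℚ_[p]) ^ (-γv q.2) * nv q.2‖)
        else (p : ℝ) ^ (-1 : ℤ))))
    (i₀ : ι) (hi₀ : ∀ i, γv i₀ ≤ γv i) :
    ∀ a b : ℚ_[p],
      ((‖a - 1‖ ≤ (p : ℝ) ^ (-1 : ℤ) ∧
          ∀ i, ‖(p : ℚ_[p]) ^ (γv i) * b - nv i * (1 - a)‖ ≤ (p : ℝ) ^ (-1 : ℤ)) ↔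
        (‖1 - a‖ ≤ (p : ℝ) ^ (-γA) ∧
          ‖b - (p : ℚ_[p]) ^ (-(γv i₀)) * nv i₀ * (1 - a)‖ ≤ (p : ℝ) ^ (γv i₀ - 1))) := by
  intro a b
  have hp : p.Prime := Fact.out
  have hp1 : (1 : ℝ) < p := by exact_mod_cast hp.one_lt
  have hp0 : (0 : ℝ) < p := lt_trans one_pos hp1
  have hpne : (p : ℚ_[p]) ≠ 0 := by
    exact_mod_cast (Nat.cast_ne_zero (R := ℚ_[p])).mpr hp.ne_zero
  set u : ℚ_[p] := 1 - a with hu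
  set m : ι → ℚ_[p] := fun i => (p : ℚ_[p]) ^ (-γv i) * nv i with hm
  -- Rewrite each condition `‖p^γ b - n u‖ ≤ p⁻¹` as a ball condition on `b`.
  have key : ∀ i : ι, (‖(p : ℚ_[p]) ^ (γv i) * b - nv i * u‖ ≤ (p : ℝ) ^ (-1 : ℤ) ↔
      ‖b - m i * u‖ ≤ (p : ℝ) ^ (γv i - 1)) := by
    intro i
    have h1 : (p : ℚ_[p]) ^ (γv i) * b - nv i * u
        = (p : ℚ_[p]) ^ (γv i) * (b - m i * u) := by
      simp only [hm, mul_sub]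
      congr 1
      rw [show (p : ℚ_[p]) ^ (γv i) * ((p : ℚ_[p]) ^ (-γv i) * nv i * u)
          = ((p : ℚ_[p]) ^ (γv i) * (p : ℚ_[p]) ^ (-γv i)) * (nv i * u) by ring,
        ← zpow_add₀ hpne, add_neg_cancel, zpow_zero, one_mul]
    have h2 : ‖(p : ℚ_[p]) ^ (γv i)‖ = (p : ℝ) ^ (-γv i) := by
      rw [norm_zpow, Padic.norm_p, inv_zpow, ← zpow_neg]
    rw [h1, norm_mul, h2]
    rw [show ((p : ℝ) ^ (-1 : ℤ)) = (p : ℝ) ^ (-γv i) * (p : ℝ) ^ (γv i - 1) by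
      rw [← zpow_add₀ (ne_of_gt hp0)]; ring_nf]
    exact mul_le_mul_iff_right₀ (zpow_pos hp0 _)
  -- notation for the filtered pair set and the function on pairs
  set S : Finset (ι × ι) := Finset.univ.filter (fun q : ι × ι =>
      (p : ℚ_[p]) ^ (-γv q.1) * nv q.1 ≠ (p : ℚ_[p]) ^ (-γv q.2) * nv q.2) with hS
  set f : ι × ι → ℝ := fun q => max ((p : ℝ) ^ (γv q.1 - 1)) ((p : ℝ) ^ (γv q.2 - 1)) /
      ‖(p : ℚ_[p]) ^ (-γv q.1) * nv q.1 - (p : ℚ_[p]) ^ (-γv q.2) * nv q.2‖ with hf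
  have hmem : ∀ q : ι × ι, m q.1 ≠ m q.2 → q ∈ S := by
    intro q hq
    simp only [hS, Finset.mem_filter, Finset.mem_univ, true_and]
    exact hq
  have hnormau : ‖a - 1‖ = ‖u‖ := by rw [hu, norm_sub_rev]
  constructor
  · rintro ⟨ha, hb⟩
    have hb' : ∀ i, ‖b - m i * u‖ ≤ (p : ℝ) ^ (γv i - 1) := fun i => (key i).mp (hb i)
    rw [hnormau] at ha
    constructor
    · -- ‖u‖ ≤ p^{-γA}
      rw [hγA]
      refine le_min ha ?_
      split_ifs with hne
      · apply Finset.le_inf'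
        intro q hq
        have hq' : m q.1 ≠ m q.2 := by
          simpa only [hS, Finset.mem_filter, Finset.mem_univ, true_and] using hq
        have hd : (0 : ℝ) < ‖m q.1 - m q.2‖ := by
          rw [norm_pos_iff]; exact sub_ne_zero.mpr hq'
        have hfq : f q = max ((p : ℝ) ^ (γv q.1 - 1)) ((p : ℝ) ^ (γv q.2 - 1)) /
            ‖m q.1 - m q.2‖ := rfl
        rw [hfq, le_div_iff₀ hd]
        rw [mul_comm, ← norm_mul,
          show (m q.1 - m q.2) * u = (b - m q.2 * u) - (b - m q.1 * u) by ring]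
        rw [sub_eq_add_neg]
        calc ‖(b - m q.2 * u) + -(b - m q.1 * u)‖
            ≤ max ‖b - m q.2 * u‖ ‖-(b - m q.1 * u)‖ := Padic.nonarchimedean _ _
          _ ≤ max ((p : ℝ) ^ (γv q.1 - 1)) ((p : ℝ) ^ (γv q.2 - 1)) := by
              rw [norm_neg]
              exact max_le (le_max_of_le_right (hb' q.2)) (le_max_of_le_left (hb' q.1))
      · exact ha
    · exact hb' i₀
  · rintro ⟨ha, hb0⟩
    have hAle : (p : ℝ) ^ (-γA) ≤ (p : ℝ) ^ (-1 : ℤ) :=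
      zpow_le_zpow_right₀ hp1.le (by omega)
    have ha' : ‖u‖ ≤ (p : ℝ) ^ (-1 : ℤ) := ha.trans hAle
    refine ⟨by rwa [hnormau], ?_⟩
    intro i
    rw [key i]
    have hmono : (p : ℝ) ^ (γv i₀ - 1) ≤ (p : ℝ) ^ (γv i - 1) :=
      zpow_le_zpow_right₀ hp1.le (by have := hi₀ i; omega)
    have hcent : ‖(m i₀ - m i) * u‖ ≤ (p : ℝ) ^ (γv i - 1) := by
      by_cases hqe : m i₀ = m i
      · rw [hqe, sub_self, zero_mul, norm_zero]
        positivity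
      · have hq : (i₀, i) ∈ S := hmem (i₀, i) hqe
        have hinf : (p : ℝ) ^ (-γA) ≤ f (i₀, i) := by
          rw [hγA]
          refine le_trans (min_le_right _ _) ?_
          rw [dif_pos ⟨_, hq⟩]
          exact Finset.inf'_le _ hq
        have hd : (0 : ℝ) < ‖m i₀ - m i‖ := by
          rw [norm_pos_iff]; exact sub_ne_zero.mpr hqe
        have this : ‖u‖ ≤ max ((p : ℝ) ^ (γv i₀ - 1)) ((p : ℝ) ^ (γv i - 1)) /
            ‖m i₀ - m i‖ := ha.trans hinf
        rw [norm_mul]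
        calc ‖m i₀ - m i‖ * ‖u‖
            ≤ ‖m i₀ - m i‖ * (max ((p : ℝ) ^ (γv i₀ - 1)) ((p : ℝ) ^ (γv i - 1)) / ‖m i₀ - m i‖) :=
              mul_le_mul_of_nonneg_left this (norm_nonneg _)
          _ = max ((p : ℝ) ^ (γv i₀ - 1)) ((p : ℝ) ^ (γv i - 1)) := by
              field_simp
          _ = (p : ℝ) ^ (γv i - 1) := max_eq_right hmono
    rw [show b - m i * u = (b - m i₀ * u) + (m i₀ - m i) * u by ring]
    calc ‖(b - m i₀ * u) + (m i₀ - m i) * u‖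
        ≤ max ‖b - m i₀ * u‖ ‖(m i₀ - m i) * u‖ := Padic.nonarchimedean _ _
      _ ≤ (p : ℝ) ^ (γv i - 1) := max_le (hb0.trans hmono) hcent
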